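/- Let (F_k)_{k∈ℤ} be a continuous quasi-hyperbolic linear cocycle on a finite-dimensional normed vector bundle over a compact metric space K, and set E^s = {v : sup_{k≥0} ‖F_k v‖ < ∞}. Then (F_n restricted to E^s)_{n≥0} is uniformly exponentially contracting: there exist C_0 > 0 and 0 < ρ < 1 such that ‖F_n v‖ ≤ C_0 ρⁿ ‖v‖ for all v ∈ E^s and n ≥ 0. Symmetrically for E^u = {v : sup_{k≤0} ‖F_k v‖ < ∞} under backward iteration. -/

import Mathlib

open Filter Topology
open Filter Topology

theorem qh_core {K : Type*} [MetricSpace K] [CompactSpace K]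
    {E : Type*} [NormedAddCommGroup E] [NormedSpace ℝ E] [FiniteDimensional ℝ E]
    (F : ℤ → K → E →L[ℝ] E)
    (hFcont : ∀ k, Continuous fun x => F k x)
    (hqh : ∀ x : K, ∀ v : E, v ≠ 0 → ∀ C : ℝ, ∃ k : ℤ, C < ‖F k x v‖)
    (A c : ℝ) (hc : 0 < c)
    (y : ℕ → K) (w : ℕ → E) (n : ℕ → ℕ) (hn : Tendsto n atTop atTop)
    (hw : ∀ j, c ≤ ‖w j‖) (hwA : ∀ j, ‖w j‖ ≤ A)
    (hb : ∀ j, ∀ i : ℤ, -(n j : ℤ) ≤ i → ‖F i (y j) (w j)‖ ≤ A) : False := by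
  set u : ℕ → K × E := fun j => (y j, w j) with hu_def
  have hs : IsCompact ((Set.univ : Set K) ×ˢ Metric.closedBall (0 : E) A) :=
    isCompact_univ.prod (isCompact_closedBall 0 A)
  have hu : ∀ j, u j ∈ (Set.univ : Set K) ×ˢ Metric.closedBall (0 : E) A := fun j =>
    ⟨trivial, by simpa [mem_closedBall_zero_iff] using hwA j⟩
  obtain ⟨p, -, φ, hφ, hconv⟩ := hs.tendsto_subseq hu
  have hwc : Tendsto (fun j => w (φ j)) atTop (𝓝 p.2) :=
    (continuous_snd.tendsto p).comp hconv
  have hp2 : c ≤ ‖p.2‖ :=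
    ge_of_tendsto hwc.norm (Eventually.of_forall fun j => hw _)
  have hne : p.2 ≠ 0 := by
    intro h; rw [h, norm_zero] at hp2; linarith
  obtain ⟨k, hk⟩ := hqh p.1 p.2 hne A
  have hcont : Continuous fun q : K × E => F k q.1 q.2 :=
    ((hFcont k).comp continuous_fst).clm_apply continuous_snd
  have hlim : Tendsto (fun j => ‖F k (y (φ j)) (w (φ j))‖) atTop (𝓝 ‖F k p.1 p.2‖) :=
    ((hcont.tendsto p).comp hconv).norm
  have hev : ∀ᶠ j in atTop, ‖F k (y (φ j)) (w (φ j))‖ ≤ A := by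
    have hnφ : Tendsto (fun j => n (φ j)) atTop atTop := hn.comp hφ.tendsto_atTop
    filter_upwards [hnφ.eventually_ge_atTop (-k).toNat] with j hj
    refine hb (φ j) k ?_
    have h1 : (-k : ℤ) ≤ ((-k).toNat : ℤ) := Int.self_le_toNat _
    have h2 : (((-k).toNat : ℕ) : ℤ) ≤ (n (φ j) : ℤ) := by exact_mod_cast hj
    linarith
  exact absurd (le_of_tendsto hlim hev) (not_le.mpr hk)

theorem qh_forward {K : Type*} [MetricSpace K] [CompactSpace K]
    {E : Type*} [NormedAddCommGroup E] [NormedSpace ℝ E] [FiniteDimensional ℝ E]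
    (ϕ : ℤ → K → K)
    (F : ℤ → K → E →L[ℝ] E)
    (hFcont : ∀ k, Continuous fun x => F k x)
    (hF0 : ∀ x, F 0 x = ContinuousLinearMap.id ℝ E)
    (hFcoc : ∀ m n : ℤ, ∀ x, F (m + n) x = (F m (ϕ n x)).comp (F n x))
    (hqh : ∀ x : K, ∀ v : E, v ≠ 0 → ∀ C : ℝ, ∃ k : ℤ, C < ‖F k x v‖) :
    ∃ C₀ : ℝ, 0 < C₀ ∧ ∃ ρ : ℝ, ρ ∈ Set.Ioo (0 : ℝ) 1 ∧
      ∀ x : K, ∀ v : E, (∃ C, ∀ k : ℤ, 0 ≤ k → ‖F k x v‖ ≤ C) →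
        ∀ n : ℕ, ‖F n x v‖ ≤ C₀ * ρ ^ n * ‖v‖ := by
  by_cases hK : Nonempty K
  case neg =>
    exact ⟨1, one_pos, 1/2, by norm_num, fun x => absurd ⟨x⟩ hK⟩
  -- uniform bounds on the operator norms
  have hBex : ∀ k : ℤ, ∃ b : ℝ, ∀ x : K, ‖F k x‖ ≤ b := by
    intro k
    obtain ⟨x0, -, hx0⟩ := isCompact_univ.exists_isMaxOn Set.univ_nonempty
      ((hFcont k).norm.continuousOn)
    exact ⟨‖F k x0‖, fun x => hx0 (Set.mem_univ x)⟩
  choose B hB using hBex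
  have hBval : ∀ (k : ℤ) (x : K) (v : E), ‖F k x v‖ ≤ B k * ‖v‖ := fun k x v =>
    le_trans ((F k x).le_opNorm v) (by gcongr; exact hB k x)
  -- basic cocycle consequence
  have happ : ∀ (m n : ℤ) (x : K) (v : E), F m (ϕ n x) (F n x v) = F (m + n) x v := by
    intro m n x v; rw [hFcoc m n x]; rfl
  -- Step A : uniform bound on the forward sup
  have stepA : ∃ M : ℝ, 1 ≤ M ∧ ∀ x v, (∃ C, ∀ k : ℤ, 0 ≤ k → ‖F k x v‖ ≤ C) →
      ∀ k : ℤ, 0 ≤ k → ‖F k x v‖ ≤ M * ‖v‖ := by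
    by_contra hcon
    push_neg at hcon
    have key : ∀ j : ℕ, ∃ (y : K) (w : E) (m : ℕ), ‖w‖ = 1 ∧
        (∀ i : ℤ, -(m : ℤ) ≤ i → ‖F i y w‖ ≤ 2) ∧ ((j : ℝ) + 1) / 2 < B (m : ℤ) := by
      intro j
      obtain ⟨x, v, hbdd, k', hk'0, hgt⟩ := hcon ((j : ℝ) + 1)
        (le_add_of_nonneg_left (Nat.cast_nonneg j))
      have hv0 : v ≠ 0 := by intro h; simp [h] at hgt
      have hvpos : (0 : ℝ) < ‖v‖ := norm_pos_iff.mpr hv0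
      obtain ⟨C, hC⟩ := hbdd
      set T : Set ℝ := (fun k : ℤ => ‖F k x v‖) '' {k : ℤ | 0 ≤ k} with hT
      have hTne : T.Nonempty := ⟨‖F 0 x v‖, Set.mem_image_of_mem _ (by simp [Set.mem_setOf_eq])⟩
      have hTbdd : BddAbove T := ⟨C, by rintro r ⟨k, hk, rfl⟩; exact hC k hk⟩
      set s := sSup T with hs
      have hle : ∀ k : ℤ, 0 ≤ k → ‖F k x v‖ ≤ s := fun k hk => le_csSup hTbdd ⟨k, hk, rfl⟩
      have hsgt : ((j : ℝ) + 1) * ‖v‖ < s := lt_of_lt_of_le hgt (hle k' hk'0)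
      have hs0 : (0 : ℝ) < s := lt_of_le_of_lt (by positivity) hsgt
      obtain ⟨r, hrT, hr⟩ := exists_lt_of_lt_csSup hTne (half_lt_self hs0)
      obtain ⟨k, hk0, rfl⟩ := hrT
      have hknorm : (0 : ℝ) < ‖F k x v‖ := lt_trans (half_pos hs0) hr
      refine ⟨ϕ k x, ‖F k x v‖⁻¹ • F k x v, k.toNat, ?_, ?_, ?_⟩
      · rw [norm_smul, norm_inv, Real.norm_of_nonneg (norm_nonneg _)]
        field_simp
      · intro i hi
        rw [Int.toNat_of_nonneg hk0] at hi
        rw [map_smul, norm_smul, norm_inv, Real.norm_of_nonneg (norm_nonneg _), happ]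
        have h1 : ‖F (i + k) x v‖ ≤ s := hle (i + k) (by omega)
        have h2 : ‖F k x v‖⁻¹ ≤ (s / 2)⁻¹ := by
          apply inv_anti₀ (half_pos hs0) hr.le
        calc ‖F k x v‖⁻¹ * ‖F (i + k) x v‖ ≤ (s / 2)⁻¹ * s :=
              mul_le_mul h2 h1 (norm_nonneg _) (by positivity)
          _ = 2 := by field_simp
      · rw [Int.toNat_of_nonneg hk0]
        have h2 : ‖F k x v‖ ≤ B k * ‖v‖ := hBval k x v
        have h3 : ((j : ℝ) + 1) / 2 * ‖v‖ < B k * ‖v‖ := by nlinarith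
        exact lt_of_mul_lt_mul_right h3 hvpos.le
    choose y w m hw hb hBm using key
    have hm : Tendsto m atTop atTop := by
      rw [tendsto_atTop_atTop]
      intro M
      set D : ℝ := (Finset.range (M + 1)).sup' (by simp) (fun r => B (r : ℤ)) with hD
      refine ⟨⌈2 * D⌉₊, fun j hj => ?_⟩
      by_contra hlt
      push_neg at hlt
      have h1 : B ((m j : ℕ) : ℤ) ≤ D :=
        Finset.le_sup' (fun r : ℕ => B (r : ℤ)) (Finset.mem_range.mpr (by omega))
      have h2 : 2 * D ≤ (j : ℝ) := le_trans (Nat.le_ceil _) (by exact_mod_cast hj)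
      have := hBm j
      linarith
    exact qh_core F hFcont hqh 2 1 one_pos y w m hm (fun j => (hw j).ge)
      (fun j => by rw [hw j]; norm_num) hb
  obtain ⟨M, hM1, hMA⟩ := stepA
  have hM0 : (0 : ℝ) < M := lt_of_lt_of_le one_pos hM1
  -- invariance of the forward-bounded set
  have hinv : ∀ (x : K) (v : E) (n : ℤ), 0 ≤ n →
      (∃ C, ∀ k : ℤ, 0 ≤ k → ‖F k x v‖ ≤ C) →
      (∃ C, ∀ k : ℤ, 0 ≤ k → ‖F k (ϕ n x) (F n x v)‖ ≤ C) := by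
    rintro x v n hn ⟨C, hC⟩
    exact ⟨C, fun k hk => by rw [happ]; exact hC (k + n) (by omega)⟩
  -- Step B : uniform half-contraction time
  have stepB : ∃ N : ℕ, 1 ≤ N ∧ ∀ x v, (∃ C, ∀ k : ℤ, 0 ≤ k → ‖F k x v‖ ≤ C) →
      ‖F (N : ℤ) x v‖ ≤ (1 / 2) * ‖v‖ := by
    by_contra hcon
    push_neg at hcon
    have key : ∀ j : ℕ, ∃ (y : K) (w : E), (1 / (2 * M) ≤ ‖w‖) ∧ ‖w‖ ≤ 1 ∧
        (∀ i : ℤ, -((j + 1 : ℕ) : ℤ) ≤ i → ‖F i y w‖ ≤ 1) := by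
      intro j
      obtain ⟨x, v, hbdd, hgt⟩ := hcon (j + 1) (by omega)
      have hv0 : v ≠ 0 := by intro h; simp [h] at hgt
      have hvpos : (0 : ℝ) < ‖v‖ := norm_pos_iff.mpr hv0
      refine ⟨ϕ ((j + 1 : ℕ) : ℤ) x, (M * ‖v‖)⁻¹ • F ((j + 1 : ℕ) : ℤ) x v, ?_, ?_, ?_⟩
      · rw [norm_smul, norm_inv, Real.norm_of_nonneg (by positivity)]
        calc 1 / (2 * M) = (M * ‖v‖)⁻¹ * (1 / 2 * ‖v‖) := by field_simp
          _ ≤ (M * ‖v‖)⁻¹ * ‖F ((j + 1 : ℕ) : ℤ) x v‖ := by gcongr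
      · rw [norm_smul, norm_inv, Real.norm_of_nonneg (by positivity)]
        have := hMA x v hbdd ((j + 1 : ℕ) : ℤ) (by positivity)
        rw [inv_mul_le_iff₀ (by positivity), mul_one]
        exact this
      · intro i hi
        rw [map_smul, norm_smul, norm_inv, Real.norm_of_nonneg (by positivity), happ]
        have := hMA x v hbdd (i + ((j + 1 : ℕ) : ℤ)) (by omega)
        rw [inv_mul_le_iff₀ (by positivity), mul_one]
        exact this
    choose y w hw hwA hb using key
    exact qh_core F hFcont hqh 1 (1 / (2 * M)) (by positivity) y w (fun j => j + 1)
      (tendsto_add_atTop_nat 1) hw hwA hb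
  obtain ⟨N, hN1, hN⟩ := stepB
  have hNpos : 0 < N := hN1
  -- the constants
  set D : ℝ := max ((Finset.range N).sup' (Finset.nonempty_range_iff.mpr (by omega))
    (fun r => B (r : ℤ))) 1 with hD
  have hD1 : (1 : ℝ) ≤ D := le_max_right _ _
  have hDr : ∀ r : ℕ, r < N → B (r : ℤ) ≤ D := fun r hr =>
    le_max_of_le_left (Finset.le_sup' (fun r : ℕ => B (r : ℤ)) (Finset.mem_range.mpr hr))
  set ρ : ℝ := (1 / 2 : ℝ) ^ ((N : ℝ)⁻¹) with hρ
  have hρpos : 0 < ρ := Real.rpow_pos_of_pos (by norm_num) _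
  have hρlt1 : ρ < 1 := Real.rpow_lt_one (by norm_num) (by norm_num) (by positivity)
  have hρN : ρ ^ N = 1 / 2 := by
    rw [hρ, ← Real.rpow_natCast ((1 / 2 : ℝ) ^ ((N : ℝ)⁻¹)) N,
      ← Real.rpow_mul (by norm_num), inv_mul_cancel₀ (by positivity : (N : ℝ) ≠ 0),
      Real.rpow_one]
  refine ⟨2 * D, by positivity, ρ, ⟨hρpos, hρlt1⟩, ?_⟩
  intro x v hbdd n
  have hbddj : ∀ m : ℤ, 0 ≤ m → ∃ C, ∀ k : ℤ, 0 ≤ k →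
      ‖F k (ϕ m x) (F m x v)‖ ≤ C := fun m hm => hinv x v m hm hbdd
  have hiter : ∀ j : ℕ, ‖F ((N * j : ℕ) : ℤ) x v‖ ≤ (1 / 2) ^ j * ‖v‖ := by
    intro j
    induction j with
    | zero => simp [hF0]
    | succ j ih =>
      have hcast : ((N * (j + 1) : ℕ) : ℤ) = (N : ℤ) + ((N * j : ℕ) : ℤ) := by
        push_cast; ring
      rw [hcast, ← happ (N : ℤ) ((N * j : ℕ) : ℤ) x v]
      calc ‖F (N : ℤ) (ϕ ((N * j : ℕ) : ℤ) x) (F ((N * j : ℕ) : ℤ) x v)‖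
          ≤ (1 / 2) * ‖F ((N * j : ℕ) : ℤ) x v‖ := hN _ _ (hbddj _ (by positivity))
        _ ≤ (1 / 2) * ((1 / 2) ^ j * ‖v‖) := by gcongr <;> norm_num
        _ = (1 / 2) ^ (j + 1) * ‖v‖ := by ring
  obtain ⟨j, r, hrN, rfl⟩ : ∃ j r, r < N ∧ n = N * j + r :=
    ⟨n / N, n % N, Nat.mod_lt _ hNpos, (Nat.div_add_mod n N).symm⟩
  have hcast : ((N * j + r : ℕ) : ℤ) = (r : ℤ) + ((N * j : ℕ) : ℤ) := by push_cast; ring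
  have hhalf : (1 / 2 : ℝ) ≤ ρ ^ r := by
    rw [← hρN]
    exact pow_le_pow_of_le_one hρpos.le hρlt1.le hrN.le
  have hpow : (1 / 2 : ℝ) ^ j ≤ 2 * ρ ^ (N * j + r) := by
    have h2 : ρ ^ (N * j + r) = (1 / 2) ^ j * ρ ^ r := by
      rw [pow_add, pow_mul, hρN]
    calc (1 / 2 : ℝ) ^ j = 2 * ((1 / 2) ^ j) * (1 / 2) := by ring
      _ ≤ 2 * ((1 / 2) ^ j) * ρ ^ r := mul_le_mul_of_nonneg_left hhalf (by positivity)
      _ = 2 * ρ ^ (N * j + r) := by rw [h2]; ring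
  rw [hcast, ← happ (r : ℤ) ((N * j : ℕ) : ℤ) x v]
  calc ‖F (r : ℤ) (ϕ ((N * j : ℕ) : ℤ) x) (F ((N * j : ℕ) : ℤ) x v)‖
      ≤ B (r : ℤ) * ‖F ((N * j : ℕ) : ℤ) x v‖ := hBval _ _ _
    _ ≤ D * ((1 / 2) ^ j * ‖v‖) := by
        apply mul_le_mul (hDr r hrN) (hiter j) (norm_nonneg _) (by linarith)
    _ ≤ D * ((2 * ρ ^ (N * j + r)) * ‖v‖) := by
        have hD0 : (0 : ℝ) ≤ D := by linarith
        gcongr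
    _ = 2 * D * ρ ^ (N * j + r) * ‖v‖ := by ring


/-- A continuous quasi-hyperbolic linear cocycle `(F_k)_{k∈ℤ}` over a
homeomorphism-flow `ϕ` of a compact metric space `K` on a finite-dimensional
normed space `E` is uniformly exponentially contracting on
`E^s = {v : sup_{k≥0} ‖F_k v‖ < ∞}` and, symmetrically, uniformly contracting
under backward iteration on `E^u = {v : sup_{k≤0} ‖F_k v‖ < ∞}`. -/
theorem stmt12 {K : Type*} [MetricSpace K] [CompactSpace K]
    {E : Type*} [NormedAddCommGroup E] [NormedSpace ℝ E] [FiniteDimensional ℝ E]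
    (ϕ : ℤ → K → K) (hϕcont : ∀ k, Continuous (ϕ k))
    (hϕ0 : ∀ x, ϕ 0 x = x) (hϕadd : ∀ m n : ℤ, ∀ x, ϕ (m + n) x = ϕ m (ϕ n x))
    (F : ℤ → K → E →L[ℝ] E)
    (hFcont : ∀ k, Continuous fun x => F k x)
    (hF0 : ∀ x, F 0 x = ContinuousLinearMap.id ℝ E)
    (hFcoc : ∀ m n : ℤ, ∀ x, F (m + n) x = (F m (ϕ n x)).comp (F n x))
    (hqh : ∀ x : K, ∀ v : E, v ≠ 0 → ∀ C : ℝ, ∃ k : ℤ, C < ‖F k x v‖) :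
    ∃ C₀ : ℝ, 0 < C₀ ∧ ∃ ρ : ℝ, ρ ∈ Set.Ioo (0 : ℝ) 1 ∧
      (∀ x : K, ∀ v : E, (∃ C, ∀ k : ℤ, 0 ≤ k → ‖F k x v‖ ≤ C) →
        ∀ n : ℕ, ‖F n x v‖ ≤ C₀ * ρ ^ n * ‖v‖) ∧
      (∀ x : K, ∀ v : E, (∃ C, ∀ k : ℤ, k ≤ 0 → ‖F k x v‖ ≤ C) →
        ∀ n : ℕ, ‖F (-(n : ℤ)) x v‖ ≤ C₀ * ρ ^ n * ‖v‖) := by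
  obtain ⟨C1, hC1, ρ1, hρ1, h1⟩ := qh_forward ϕ F hFcont hF0 hFcoc hqh
  obtain ⟨C2, hC2, ρ2, hρ2, h2⟩ := qh_forward (fun k => ϕ (-k)) (fun k x => F (-k) x)
    (fun k => hFcont (-k))
    (fun x => by show F (-0) x = _; rw [neg_zero]; exact hF0 x)
    (fun m n x => by show F (-(m + n)) x = (F (-m) (ϕ (-n) x)).comp (F (-n) x); rw [neg_add]; exact hFcoc (-m) (-n) x)
    (fun x v hv C => by
      obtain ⟨k, hk⟩ := hqh x v hv C
      exact ⟨-k, by simpa using hk⟩)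
  refine ⟨max C1 C2, lt_max_of_lt_left hC1, max ρ1 ρ2,
    ⟨lt_max_of_lt_left hρ1.1, max_lt hρ1.2 hρ2.2⟩, ?_, ?_⟩
  · intro x v hb n
    refine le_trans (h1 x v hb n) ?_
    have hpow : ρ1 ^ n ≤ (max ρ1 ρ2) ^ n := pow_le_pow_left₀ hρ1.1.le (le_max_left _ _) n
    have hC : C1 ≤ max C1 C2 := le_max_left _ _
    have h0 : (0 : ℝ) ≤ ρ1 ^ n := pow_nonneg hρ1.1.le n
    calc C1 * ρ1 ^ n * ‖v‖ ≤ max C1 C2 * (max ρ1 ρ2) ^ n * ‖v‖ := by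
          apply mul_le_mul_of_nonneg_right _ (norm_nonneg v)
          exact mul_le_mul hC hpow h0 (le_trans hC1.le hC)
      _ = _ := rfl
  · intro x v hb n
    obtain ⟨C, hC⟩ := hb
    have hb' : ∃ C, ∀ k : ℤ, 0 ≤ k → ‖F (-k) x v‖ ≤ C :=
      ⟨C, fun k hk => hC (-k) (by omega)⟩
    refine le_trans (h2 x v hb' n) ?_
    have hpow : ρ2 ^ n ≤ (max ρ1 ρ2) ^ n := pow_le_pow_left₀ hρ2.1.le (le_max_right _ _) n
    have hCle : C2 ≤ max C1 C2 := le_max_right _ _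
    have h0 : (0 : ℝ) ≤ ρ2 ^ n := pow_nonneg hρ2.1.le n
    apply mul_le_mul_of_nonneg_right _ (norm_nonneg v)
    exact mul_le_mul hCle hpow h0 (le_trans hC2.le hCle)
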